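/- Given an (s,2s)-SSS generator for an n×n matrix A on a grid of N = n/s blocks of size s×s (with generator matrices P_i ∈ K^{s×2s}, Q_i ∈ K^{2s×s}, R_i ∈ K^{2s×2s}, U_i ∈ K^{s×2s}, V_i ∈ K^{2s×s}, W_i ∈ K^{2s×2s}, D_i ∈ K^{s×s}), the merged matrices P'_i = [P_{2i-1}; P_{2i} R_{2i-1}], Q'_i = [R_{2i} Q_{2i-1} Q_{2i}], R'_i = R_{2i} R_{2i-1}, U'_i = [U_{2i-1} W_{2i}; U_{2i}], V'_i = [V_{2i-1} W_{2i-1} V_{2i}], W'_i = W_{2i-1} W_{2i}, D'_i = [[D_{2i-1}, U_{2i-1} V_{2i}], [P_{2i} Q_{2i-1}, D_{2i}]] form a 2s-SSS generator for A on the coarser grid of 2s×2s blocks. -/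

import Mathlib

/-- The `t×t` block of `A` at (0-based) block position `(i, j)` (junk `0` out of range). -/
def blk {K : Type*} [Field K] {n : ℕ} (t : ℕ) (A : Matrix (Fin n) (Fin n) K)
    (i j : ℕ) : Matrix (Fin t) (Fin t) K :=
  fun a b =>
    if h : i * t + (a : ℕ) < n ∧ j * t + (b : ℕ) < n then
      A ⟨i * t + (a : ℕ), h.1⟩ ⟨j * t + (b : ℕ), h.2⟩
    else 0

/-- Descending chain product `R_{j+m} * R_{j+m-1} * ⋯ * R_{j+1}` (with `m` factors). -/
def chainDesc {K : Type*} [Field K] {m' : Type*} [Fintype m'] [DecidableEq m']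
    (R : ℕ → Matrix m' m' K) (j : ℕ) : ℕ → Matrix m' m' K
  | 0 => 1
  | m + 1 => R (j + m + 1) * chainDesc R j m

/-- Ascending chain product `W_{i+1} * W_{i+2} * ⋯ * W_{i+m}` (with `m` factors). -/
def chainAsc {K : Type*} [Field K] {m' : Type*} [Fintype m'] [DecidableEq m']
    (W : ℕ → Matrix m' m' K) (i : ℕ) : ℕ → Matrix m' m' K
  | 0 => 1
  | m + 1 => chainAsc W i m * W (i + m + 1)

/-- Horizontal concatenation `[X Y]`. -/
def hcat {K : Type*} {m p q : Type*} (X : Matrix m p K) (Y : Matrix m q K) :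
    Matrix m (p ⊕ q) K :=
  fun i => Sum.elim (X i) (Y i)

/-- Vertical concatenation `[X; Y]`. -/
def vcat {K : Type*} {m p q : Type*} (X : Matrix p m K) (Y : Matrix q m K) :
    Matrix (p ⊕ q) m K :=
  fun i j => Sum.elim (fun a => X a j) (fun a => Y a j) i

section Aux

variable {K : Type*} [Field K]

omit [Field K] in
lemma vcat_eq_fromRows {m p q : Type*} (X : Matrix p m K) (Y : Matrix q m K) :
    vcat X Y = Matrix.fromRows X Y := by
  ext (a | a) b <;> rfl

omit [Field K] in
lemma hcat_eq_fromColumns {m p q : Type*} (X : Matrix m p K) (Y : Matrix m q K) :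
    hcat X Y = Matrix.fromCols X Y := by
  ext a (b | b) <;> rfl

variable {m' : Type*} [Fintype m'] [DecidableEq m']

lemma chainDesc_shift (R : ℕ → Matrix m' m' K) (j m : ℕ) :
    chainDesc R (j + 1) m * R (j + 1) = chainDesc R j (m + 1) := by
  induction m with
  | zero => simp [chainDesc]
  | succ m ih =>
      show R (j + 1 + m + 1) * chainDesc R (j + 1) m * R (j + 1)
        = R (j + (m + 1) + 1) * chainDesc R j (m + 1)
      rw [show j + 1 + m + 1 = j + (m + 1) + 1 from by omega, Matrix.mul_assoc, ih]

lemma chainAsc_shift (W : ℕ → Matrix m' m' K) (i m : ℕ) :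
    W (i + 1) * chainAsc W (i + 1) m = chainAsc W i (m + 1) := by
  induction m with
  | zero => simp [chainAsc]
  | succ m ih =>
      show W (i + 1) * (chainAsc W (i + 1) m * W (i + 1 + m + 1))
        = chainAsc W i (m + 1) * W (i + (m + 1) + 1)
      rw [show i + 1 + m + 1 = i + (m + 1) + 1 from by omega, ← Matrix.mul_assoc, ih]

lemma chainDesc_pair (R : ℕ → Matrix m' m' K) (j m : ℕ) :
    chainDesc (fun k => R (2 * k + 1) * R (2 * k)) j m = chainDesc R (2 * j + 1) (2 * m) := by
  induction m with
  | zero => rfl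
  | succ m ih =>
      show (R (2 * (j + m + 1) + 1) * R (2 * (j + m + 1))) *
          chainDesc (fun k => R (2 * k + 1) * R (2 * k)) j m = _
      rw [ih]
      have e : chainDesc R (2 * j + 1) (2 * (m + 1))
          = R (2 * (j + m + 1) + 1) * (R (2 * (j + m + 1)) * chainDesc R (2 * j + 1) (2 * m)) := by
        rw [show 2 * (m + 1) = 2 * m + 1 + 1 from by omega]
        show R (2 * j + 1 + (2 * m + 1) + 1) *
          (R (2 * j + 1 + (2 * m) + 1) * chainDesc R (2 * j + 1) (2 * m)) = _
        rw [show 2 * j + 1 + (2 * m + 1) + 1 = 2 * (j + m + 1) + 1 from by omega,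
          show 2 * j + 1 + (2 * m) + 1 = 2 * (j + m + 1) from by omega]
      rw [e, Matrix.mul_assoc]

lemma chainAsc_pair (W : ℕ → Matrix m' m' K) (i m : ℕ) :
    chainAsc (fun k => W (2 * k) * W (2 * k + 1)) i m = chainAsc W (2 * i + 1) (2 * m) := by
  induction m with
  | zero => rfl
  | succ m ih =>
      show chainAsc (fun k => W (2 * k) * W (2 * k + 1)) i m *
          (W (2 * (i + m + 1)) * W (2 * (i + m + 1) + 1)) = _
      rw [ih]
      have e : chainAsc W (2 * i + 1) (2 * (m + 1))
          = (chainAsc W (2 * i + 1) (2 * m) * W (2 * (i + m + 1))) * W (2 * (i + m + 1) + 1) := by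
        rw [show 2 * (m + 1) = 2 * m + 1 + 1 from by omega]
        show (chainAsc W (2 * i + 1) (2 * m) * W (2 * i + 1 + (2 * m) + 1)) *
          W (2 * i + 1 + (2 * m + 1) + 1) = _
        rw [show 2 * i + 1 + (2 * m) + 1 = 2 * (i + m + 1) from by omega,
          show 2 * i + 1 + (2 * m + 1) + 1 = 2 * (i + m + 1) + 1 from by omega]
      rw [e, Matrix.mul_assoc]

/-- entry helper -/
def ent {n : ℕ} (A : Matrix (Fin n) (Fin n) K) (x y : ℕ) : K :=
  if h : x < n ∧ y < n then A ⟨x, h.1⟩ ⟨y, h.2⟩ else 0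

lemma ent_congr {n : ℕ} (A : Matrix (Fin n) (Fin n) K) {x x' y y' : ℕ}
    (h1 : x = x') (h2 : y = y') : ent A x y = ent A x' y' := by rw [h1, h2]

lemma blk_apply {n : ℕ} (t : ℕ) (A : Matrix (Fin n) (Fin n) K) (i j : ℕ)
    (a b : Fin t) : blk t A i j a b = ent A (i * t + a) (j * t + b) := rfl

lemma blk_two {n : ℕ} (s : ℕ) (A : Matrix (Fin n) (Fin n) K) (i j : ℕ) :
    blk (s + s) A i j =
      Matrix.reindex finSumFinEquiv finSumFinEquiv
        (Matrix.fromBlocks (blk s A (2 * i) (2 * j)) (blk s A (2 * i) (2 * j + 1))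
          (blk s A (2 * i + 1) (2 * j)) (blk s A (2 * i + 1) (2 * j + 1))) := by
  have key : ∀ a b : Fin s ⊕ Fin s,
      blk (s + s) A i j (finSumFinEquiv a) (finSumFinEquiv b) =
        Matrix.fromBlocks (blk s A (2 * i) (2 * j)) (blk s A (2 * i) (2 * j + 1))
          (blk s A (2 * i + 1) (2 * j)) (blk s A (2 * i + 1) (2 * j + 1)) a b := by
    rintro (a | a) (b | b) <;>
      simp only [blk_apply, Matrix.fromBlocks_apply₁₁, Matrix.fromBlocks_apply₁₂,
        Matrix.fromBlocks_apply₂₁, Matrix.fromBlocks_apply₂₂,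
        finSumFinEquiv_apply_left, finSumFinEquiv_apply_right, Fin.coe_castAdd,
        Fin.coe_natAdd] <;>
      exact ent_congr A (by ring) (by ring)
  ext a b
  rw [Matrix.reindex_apply, Matrix.submatrix_apply, ← key]
  simp

end Aux

/-- Given an `(s,2s)`-SSS generator for an `n×n` matrix `A` (`n = N·s` with `N = 2M` even),
i.e. matrices `P_i ∈ K^{s×2s}`, `Q_i ∈ K^{2s×s}`, `R_i, W_i ∈ K^{2s×2s}`, `U_i ∈ K^{s×2s}`,
`V_i ∈ K^{2s×s}`, `D_i ∈ K^{s×s}` satisfying the SSS block equations on the `s×s` grid,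
the merged matrices
`P'_i = [P_{2i}; P_{2i+1} R_{2i}]`, `Q'_i = [R_{2i+1} Q_{2i}  Q_{2i+1}]`,
`R'_i = R_{2i+1} R_{2i}`, `U'_i = [U_{2i} W_{2i+1}; U_{2i+1}]`,
`V'_i = [V_{2i}  W_{2i} V_{2i+1}]`, `W'_i = W_{2i} W_{2i+1}`,
`D'_i = [[D_{2i}, U_{2i} V_{2i+1}], [P_{2i+1} Q_{2i}, D_{2i+1}]]`
(0-based indices; `2i, 2i+1` correspond to the 1-based `2i-1, 2i`) form a `2s`-SSS generator
for `A` on the coarser grid of `2s×2s` blocks. -/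


theorem sss_compression {K : Type*} [Field K] (M s : ℕ)
    (A : Matrix (Fin (2 * M * s)) (Fin (2 * M * s)) K)
    (P U : ℕ → Matrix (Fin s) (Fin s ⊕ Fin s) K)
    (Q V : ℕ → Matrix (Fin s ⊕ Fin s) (Fin s) K)
    (R W : ℕ → Matrix (Fin s ⊕ Fin s) (Fin s ⊕ Fin s) K)
    (D : ℕ → Matrix (Fin s) (Fin s) K)
    (hlow : ∀ i j : ℕ, i < 2 * M → j < i →
      blk s A i j = P i * chainDesc R j (i - j - 1) * Q j)
    (hdiag : ∀ i : ℕ, i < 2 * M → blk s A i i = D i)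
    (hup : ∀ i j : ℕ, j < 2 * M → i < j →
      blk s A i j = U i * chainAsc W i (j - i - 1) * V j) :
    (∀ i j : ℕ, i < M → j < i →
      blk (s + s) A i j =
        Matrix.reindex finSumFinEquiv finSumFinEquiv
          (vcat (P (2 * i)) (P (2 * i + 1) * R (2 * i)) *
            chainDesc (fun k => R (2 * k + 1) * R (2 * k)) j (i - j - 1) *
            hcat (R (2 * j + 1) * Q (2 * j)) (Q (2 * j + 1)))) ∧
    (∀ i : ℕ, i < M →
      blk (s + s) A i i =
        Matrix.reindex finSumFinEquiv finSumFinEquiv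
          (Matrix.fromBlocks (D (2 * i)) (U (2 * i) * V (2 * i + 1))
            (P (2 * i + 1) * Q (2 * i)) (D (2 * i + 1)))) ∧
    (∀ i j : ℕ, j < M → i < j →
      blk (s + s) A i j =
        Matrix.reindex finSumFinEquiv finSumFinEquiv
          (vcat (U (2 * i) * W (2 * i + 1)) (U (2 * i + 1)) *
            chainAsc (fun k => W (2 * k) * W (2 * k + 1)) i (j - i - 1) *
            hcat (V (2 * j)) (W (2 * j) * V (2 * j + 1)))) := by
  refine ⟨?_, ?_, ?_⟩
  · -- lower triangular part
    intro i j hi hj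
    obtain ⟨d, rfl⟩ := Nat.exists_eq_add_of_lt hj
    rw [blk_two, vcat_eq_fromRows, hcat_eq_fromColumns]
    congr 1
    rw [show j + d + 1 - j - 1 = d from by omega, chainDesc_pair,
      Matrix.fromRows_mul, Matrix.fromRows_mul_fromCols]
    have h11 : blk s A (2 * (j + d + 1)) (2 * j)
        = P (2 * (j + d + 1)) * (chainDesc R (2 * j + 1) (2 * d) * (R (2 * j + 1) * Q (2 * j))) := by
      rw [hlow (2 * (j + d + 1)) (2 * j) (by omega) (by omega),
        show 2 * (j + d + 1) - 2 * j - 1 = 2 * d + 1 from by omega, ← chainDesc_shift]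
      simp only [Matrix.mul_assoc]
    have h12 : blk s A (2 * (j + d + 1)) (2 * j + 1)
        = P (2 * (j + d + 1)) * (chainDesc R (2 * j + 1) (2 * d) * Q (2 * j + 1)) := by
      rw [hlow (2 * (j + d + 1)) (2 * j + 1) (by omega) (by omega),
        show 2 * (j + d + 1) - (2 * j + 1) - 1 = 2 * d from by omega, Matrix.mul_assoc]
    have hstep : chainDesc R (2 * j) (2 * d + 1 + 1)
        = R (2 * (j + d + 1)) * (chainDesc R (2 * j + 1) (2 * d) * R (2 * j + 1)) := by
      show R (2 * j + (2 * d + 1) + 1) * chainDesc R (2 * j) (2 * d + 1) = _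
      rw [← chainDesc_shift, show 2 * j + (2 * d + 1) + 1 = 2 * (j + d + 1) from by omega]
    have h21 : blk s A (2 * (j + d + 1) + 1) (2 * j)
        = P (2 * (j + d + 1) + 1) * (R (2 * (j + d + 1)) *
            (chainDesc R (2 * j + 1) (2 * d) * (R (2 * j + 1) * Q (2 * j)))) := by
      rw [hlow (2 * (j + d + 1) + 1) (2 * j) (by omega) (by omega),
        show 2 * (j + d + 1) + 1 - 2 * j - 1 = 2 * d + 1 + 1 from by omega, hstep]
      simp only [Matrix.mul_assoc]
    have h22 : blk s A (2 * (j + d + 1) + 1) (2 * j + 1)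
        = P (2 * (j + d + 1) + 1) * (R (2 * (j + d + 1)) *
            (chainDesc R (2 * j + 1) (2 * d) * Q (2 * j + 1))) := by
      rw [hlow (2 * (j + d + 1) + 1) (2 * j + 1) (by omega) (by omega),
        show 2 * (j + d + 1) + 1 - (2 * j + 1) - 1 = 2 * d + 1 from by omega]
      show P (2 * (j + d + 1) + 1) *
          (R (2 * j + 1 + 2 * d + 1) * chainDesc R (2 * j + 1) (2 * d)) * Q (2 * j + 1) = _
      rw [show 2 * j + 1 + 2 * d + 1 = 2 * (j + d + 1) from by omega]
      simp only [Matrix.mul_assoc]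
    rw [h11, h12, h21, h22]
    simp only [Matrix.mul_assoc]
  · -- diagonal part
    intro i hi
    rw [blk_two]
    congr 1
    rw [hdiag (2 * i) (by omega), hdiag (2 * i + 1) (by omega),
      hlow (2 * i + 1) (2 * i) (by omega) (by omega),
      hup (2 * i) (2 * i + 1) (by omega) (by omega),
      show 2 * i + 1 - 2 * i - 1 = 0 from by omega]
    show Matrix.fromBlocks _ (U (2 * i) * (1 : Matrix _ _ K) * V (2 * i + 1))
      (P (2 * i + 1) * (1 : Matrix _ _ K) * Q (2 * i)) _ = _
    rw [Matrix.mul_one, Matrix.mul_one]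
  · -- upper triangular part
    intro i j hj hij
    obtain ⟨d, rfl⟩ := Nat.exists_eq_add_of_lt hij
    rw [blk_two, vcat_eq_fromRows, hcat_eq_fromColumns]
    congr 1
    rw [show i + d + 1 - i - 1 = d from by omega, chainAsc_pair,
      Matrix.fromRows_mul, Matrix.fromRows_mul_fromCols]
    have h11 : blk s A (2 * i) (2 * (i + d + 1))
        = U (2 * i) * (W (2 * i + 1) *
            (chainAsc W (2 * i + 1) (2 * d) * V (2 * (i + d + 1)))) := by
      rw [hup (2 * i) (2 * (i + d + 1)) (by omega) (by omega),
        show 2 * (i + d + 1) - 2 * i - 1 = 2 * d + 1 from by omega, ← chainAsc_shift]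
      simp only [Matrix.mul_assoc]
    have h12 : blk s A (2 * i) (2 * (i + d + 1) + 1)
        = U (2 * i) * (W (2 * i + 1) * (chainAsc W (2 * i + 1) (2 * d) *
            (W (2 * (i + d + 1)) * V (2 * (i + d + 1) + 1)))) := by
      rw [hup (2 * i) (2 * (i + d + 1) + 1) (by omega) (by omega),
        show 2 * (i + d + 1) + 1 - 2 * i - 1 = 2 * d + 1 + 1 from by omega]
      show U (2 * i) * (chainAsc W (2 * i) (2 * d + 1) * W (2 * i + (2 * d + 1) + 1))
        * V (2 * (i + d + 1) + 1) = _
      rw [show 2 * i + (2 * d + 1) + 1 = 2 * (i + d + 1) from by omega, ← chainAsc_shift]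
      simp only [Matrix.mul_assoc]
    have h21 : blk s A (2 * i + 1) (2 * (i + d + 1))
        = U (2 * i + 1) * (chainAsc W (2 * i + 1) (2 * d) * V (2 * (i + d + 1))) := by
      rw [hup (2 * i + 1) (2 * (i + d + 1)) (by omega) (by omega),
        show 2 * (i + d + 1) - (2 * i + 1) - 1 = 2 * d from by omega, Matrix.mul_assoc]
    have h22 : blk s A (2 * i + 1) (2 * (i + d + 1) + 1)
        = U (2 * i + 1) * (chainAsc W (2 * i + 1) (2 * d) *
            (W (2 * (i + d + 1)) * V (2 * (i + d + 1) + 1))) := by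
      rw [hup (2 * i + 1) (2 * (i + d + 1) + 1) (by omega) (by omega),
        show 2 * (i + d + 1) + 1 - (2 * i + 1) - 1 = 2 * d + 1 from by omega]
      show U (2 * i + 1) * (chainAsc W (2 * i + 1) (2 * d) * W (2 * i + 1 + (2 * d) + 1))
        * V (2 * (i + d + 1) + 1) = _
      rw [show 2 * i + 1 + (2 * d) + 1 = 2 * (i + d + 1) from by omega]
      simp only [Matrix.mul_assoc]
    rw [h11, h12, h21, h22]
    simp only [Matrix.mul_assoc]
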